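/- Let I = (x_{1 j_1} x_{2 j_2} ··· x_{m j_m} : j_1 + ... + j_m ≤ n, all j_i ≥ 1) in S = K[x_{ij}]. For b ∈ [n]^m write x_b = x_{1b_1}···x_{mb_m}, and extend the componentwise partial order on exponent vectors b to any total order <. Then for every b with |b| ≤ n, the colon ideal (x_c : x_c < x_b, |c| ≤ n) : x_b equals the prime ideal (x_{ij} : 1 ≤ i ≤ m, 1 ≤ j < b_i). -/

import Mathlib

open MvPolynomial

/-- The squarefree monomial `x_b = x_{1b_1} x_{2b_2} ⋯ x_{mb_m}`. -/
noncomputable def xB {K : Type*} [Field K] {m n : ℕ} (b : Fin m → Fin n) :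
    MvPolynomial (Fin m × Fin n) K :=
  ∏ i, (X (i, b i) : MvPolynomial (Fin m × Fin n) K)

/-- `|b| = b_1 + ⋯ + b_m` in the 1-indexed convention of the paper. -/
def bSize {m n : ℕ} (b : Fin m → Fin n) : ℕ := ∑ i, ((b i : ℕ) + 1)

/-- The exponent vector of `xB b`. -/
noncomputable def expB {m n : ℕ} (b : Fin m → Fin n) : (Fin m × Fin n) →₀ ℕ :=
  ∑ i, Finsupp.single (i, b i) 1

lemma xB_eq {K : Type*} [Field K] {m n : ℕ} (b : Fin m → Fin n) :
    xB (K := K) b = monomial (expB b) 1 := by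
  classical
  unfold xB expB
  induction (Finset.univ : Finset (Fin m)) using Finset.induction with
  | empty => simp
  | insert a s h ih =>
      rw [Finset.prod_insert h, Finset.sum_insert h, ih, X, monomial_mul, one_mul]

lemma expB_apply {m n : ℕ} (b : Fin m → Fin n) (i : Fin m) (j : Fin n) :
    expB b (i, j) = if b i = j then 1 else 0 := by
  classical
  unfold expB
  rw [Finsupp.finset_sum_apply]
  rw [Finset.sum_eq_single i]
  · simp [Finsupp.single_apply, Prod.ext_iff]
  · intro k _ hk
    simp [Finsupp.single_apply, Prod.ext_iff, hk]
  · simp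

/-- For `I = (x_c : |c| ≤ n)` and a total order `lt` refining the componentwise
partial order on exponent vectors, the colon ideal
`(x_c : x_c < x_b, |c| ≤ n) : x_b` equals `(x_{ij} : j < b_i)`. -/
theorem stmt15 {K : Type*} [Field K] {m n : ℕ}
    (lt : (Fin m → Fin n) → (Fin m → Fin n) → Prop)
    (hlin : IsStrictTotalOrder (Fin m → Fin n) lt)
    (hext : ∀ b c : Fin m → Fin n, (∀ i, b i ≤ c i) → b ≠ c → lt b c)
    (b : Fin m → Fin n) (hb : bSize b ≤ n) :
    (Ideal.span {f | ∃ c : Fin m → Fin n, lt c b ∧ bSize c ≤ n ∧ f = xB (K := K) c}).colon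
        (Ideal.span {xB (K := K) b}) =
      Ideal.span {f | ∃ (i : Fin m) (j : Fin n), (j : ℕ) < (b i : ℕ) ∧
        f = (X (i, j) : MvPolynomial (Fin m × Fin n) K)} := by
  classical
  have hirr := hlin.irrefl
  have htrans := hlin.trans
  -- rewrite the two monomial sets as images of `monomial · 1`
  have hJ : {f | ∃ c : Fin m → Fin n, lt c b ∧ bSize c ≤ n ∧ f = xB (K := K) c} =
      (fun s => monomial s (1 : K)) '' {d | ∃ c : Fin m → Fin n,
        lt c b ∧ bSize c ≤ n ∧ d = expB c} := by
    ext f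
    constructor
    · rintro ⟨c, h1, h2, rfl⟩
      exact ⟨expB c, ⟨c, h1, h2, rfl⟩, (xB_eq c).symm⟩
    · rintro ⟨d, ⟨c, h1, h2, rfl⟩, rfl⟩
      exact ⟨c, h1, h2, (xB_eq c).symm⟩
  have hP : {f | ∃ (i : Fin m) (j : Fin n), (j : ℕ) < (b i : ℕ) ∧
        f = (X (i, j) : MvPolynomial (Fin m × Fin n) K)} =
      (fun s => monomial s (1 : K)) '' {d | ∃ (i : Fin m) (j : Fin n),
        (j : ℕ) < (b i : ℕ) ∧ d = Finsupp.single (i, j) 1} := by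
    ext f
    constructor
    · rintro ⟨i, j, h1, rfl⟩
      exact ⟨Finsupp.single (i, j) 1, ⟨i, j, h1, rfl⟩, rfl⟩
    · rintro ⟨d, ⟨i, j, h1, rfl⟩, rfl⟩
      exact ⟨i, j, h1, rfl⟩
  apply le_antisymm
  · -- hard direction
    intro f hf
    rw [Ideal.mem_colon_span_singleton] at hf
    rw [hJ, mem_ideal_span_monomial_image] at hf
    rw [hP, mem_ideal_span_monomial_image]
    intro μ hμ
    have hcoeff : coeff (μ + expB b) (f * xB (K := K) b) = coeff μ f := by
      rw [xB_eq, coeff_mul_monomial, mul_one]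
    have hmem : μ + expB b ∈ (f * xB (K := K) b).support := by
      rw [mem_support_iff, hcoeff]
      exact mem_support_iff.mp hμ
    obtain ⟨d, ⟨c, hcb, _, rfl⟩, hle⟩ := hf _ hmem
    -- find i with c i < b i
    have : ∃ i, (c i : ℕ) < (b i : ℕ) := by
      by_contra h
      push_neg at h
      have hbc : ∀ i, b i ≤ c i := fun i => Fin.le_def.mpr (h i)
      rcases eq_or_ne b c with rfl | hne
      · exact hirr b hcb
      · exact hirr b (htrans b c b (hext b c hbc hne) hcb)
    obtain ⟨i, hi⟩ := this
    refine ⟨Finsupp.single (i, c i) 1, ⟨i, c i, hi, rfl⟩, ?_⟩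
    rw [Finsupp.single_le_iff]
    have h1 := hle (i, c i)
    rw [Finsupp.add_apply, expB_apply, expB_apply] at h1
    have hb0 : b i ≠ c i := fun h => absurd (congrArg Fin.val h) (by omega)
    simp only [if_pos rfl, if_neg hb0, add_zero] at h1
    exact h1
  · -- easy direction
    rw [Ideal.span_le]
    rintro f ⟨i, j, hij, rfl⟩
    rw [SetLike.mem_coe, Ideal.mem_colon_span_singleton]
    set c : Fin m → Fin n := Function.update b i j with hc
    have hcb : ∀ k, c k ≤ b k := by
      intro k
      rcases eq_or_ne k i with rfl | hk
      · rw [hc, Function.update_self, Fin.le_def]; omega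
      · rw [hc, Function.update_of_ne hk]
    have hne : c ≠ b := by
      intro h
      have := congrArg (fun g => (g i : ℕ)) h
      simp [hc] at this
      omega
    have hlt : lt c b := hext c b hcb hne
    have hsize : bSize c ≤ n := by
      refine le_trans ?_ hb
      unfold bSize
      apply Finset.sum_le_sum
      intro k _
      have := hcb k
      rw [Fin.le_def] at this
      omega
    have hxc : xB (K := K) c ∈ Ideal.span {f | ∃ c : Fin m → Fin n,
        lt c b ∧ bSize c ≤ n ∧ f = xB (K := K) c} :=
      Ideal.subset_span ⟨c, hlt, hsize, rfl⟩
    have key : (X (i, j) : MvPolynomial (Fin m × Fin n) K) * xB b =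
        xB c * X (i, b i) := by
      unfold xB
      rw [Finset.prod_eq_mul_prod_sdiff_singleton_of_mem (Finset.mem_univ i)
        (fun k => (X (k, b k) : MvPolynomial (Fin m × Fin n) K)),
        Finset.prod_eq_mul_prod_sdiff_singleton_of_mem (Finset.mem_univ i)
        (fun k => (X (k, c k) : MvPolynomial (Fin m × Fin n) K))]
      have hprod : ∏ k ∈ Finset.univ \ {i}, (X (k, c k) : MvPolynomial (Fin m × Fin n) K) =
          ∏ k ∈ Finset.univ \ {i}, (X (k, b k) : MvPolynomial (Fin m × Fin n) K) := by
        apply Finset.prod_congr rfl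
        intro k hk
        simp only [Finset.mem_sdiff, Finset.mem_singleton] at hk
        rw [hc, Function.update_of_ne hk.2]
      rw [hprod, hc]
      simp [Function.update_self]
      ring
    rw [key]
    exact Ideal.mul_mem_right _ _ hxc
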